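/- Let H be a complex inner product space, q ∈ ℝ, let ξ₀ ∈ H be a unit vector (⟨ξ₀, ξ₀⟩ = 1) and let ξ₁ ∈ H satisfy ⟨ξ₀, ξ₁⟩ = 0 = ⟨ξ₁, ξ₀⟩. Then for every n ≥ 0, H_n^q(s_{ξ₀})(ξ₁) = ξ₀^{⊗n} ⊗ ξ₁ (with the convention that the n = 0 term is ξ₁). -/

import Mathlib

noncomputable section

variable {H : Type*} [NormedAddCommGroup H] [InnerProductSpace ℂ H]

/-- `[n]_q = 1 + q + ⋯ + q^(n-1)`. -/
def qInt (q : ℝ) (n : ℕ) : ℝ := ∑ i ∈ Finset.range n, q ^ i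

/-- The `q`-Hermite polynomials (with complex coefficients):
`H₀ = 1`, `H₁ = X` and `X·Hₙ = Hₙ₊₁ + [n]_q·Hₙ₋₁`. -/
def qHermite (q : ℝ) : ℕ → Polynomial ℂ
  | 0 => 1
  | 1 => Polynomial.X
  | n + 2 =>
      Polynomial.X * qHermite q (n + 1) - Polynomial.C ((qInt q (n + 1) : ℝ) : ℂ) * qHermite q n

/-- The simple tensor `ζ 0 ⊗ ⋯ ⊗ ζ (n-1)` in the algebraic Fock space
`F(H) = ⨁ₙ H^{⊗n}`, realized as the tensor algebra (for `n = 0` this is the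
vacuum vector `Ω = 1`). -/
def st (n : ℕ) (ζ : Fin n → H) : TensorAlgebra ℂ H :=
  (List.ofFn fun i => TensorAlgebra.ι ℂ (ζ i)).prod

/-- Remove the `i`-th entry from a tuple. -/
def removeNth {α : Type*} : {n : ℕ} → Fin n → (Fin n → α) → Fin (n - 1) → α
  | 0, i, _ => i.elim0
  | _ + 1, i, ζ => fun j => ζ (i.succAbove j)

/-- `c` is the family of `q`-creation operators. -/
def IsCreation (c : H → Module.End ℂ (TensorAlgebra ℂ H)) : Prop :=
  ∀ (ξ : H) (n : ℕ) (ζ : Fin n → H), c ξ (st n ζ) = st (n + 1) (Fin.cons ξ ζ)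

/-- `a` is the family of `q`-annihilation operators. -/
def IsAnnihilation (q : ℝ) (a : H → Module.End ℂ (TensorAlgebra ℂ H)) : Prop :=
  ∀ (ξ : H) (n : ℕ) (ζ : Fin n → H),
    a ξ (st n ζ) =
      ∑ i : Fin n, ((q : ℂ) ^ (i : ℕ) * (inner ℂ ξ (ζ i) : ℂ)) • st (n - 1) (removeNth i ζ)

lemma removeNth_castSucc_snoc {α : Type*} {m : ℕ} (i : Fin (m + 1))
    (f : Fin (m + 1) → α) (b : α) :
    removeNth (i.castSucc) (Fin.snoc f b) = Fin.snoc (fun j : Fin m => f (i.succAbove j)) b := by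
  funext j
  refine Fin.lastCases ?_ ?_ j
  · show (Fin.snoc f b : Fin (m+2) → α) ((i.castSucc).succAbove (Fin.last m)) = _
    rw [Fin.succAbove_of_le_castSucc _ _ (by
      simpa using (Fin.le_last i : i ≤ Fin.last m)), Fin.succ_last]
    simp
  · intro k
    show (Fin.snoc f b : Fin (m+2) → α) ((i.castSucc).succAbove k.castSucc) = _
    rw [Fin.castSucc_succAbove_castSucc]
    simp


/-- If `ξ₀` is a unit vector and `ξ₁ ⊥ ξ₀`, then `H_n^q(s_{ξ₀}) ξ₁ = ξ₀^{⊗n} ⊗ ξ₁`. -/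
theorem stmt10 (q : ℝ) (c a : H → Module.End ℂ (TensorAlgebra ℂ H))
    (hc : IsCreation c) (ha : IsAnnihilation q a)
    (ξ₀ : H) (hξ₀ : (inner ℂ ξ₀ ξ₀ : ℂ) = 1)
    (ξ₁ : H) (horth₁ : (inner ℂ ξ₀ ξ₁ : ℂ) = 0) (horth₂ : (inner ℂ ξ₁ ξ₀ : ℂ) = 0)
    (n : ℕ) :
    (Polynomial.aeval (c ξ₀ + a ξ₀) (qHermite q n)) (st 1 fun _ => ξ₁) =
      st (n + 1) (Fin.snoc (fun _ : Fin n => ξ₀) ξ₁) := by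
  set s := c ξ₀ + a ξ₀ with hs
  set v : ∀ n : ℕ, TensorAlgebra ℂ H := fun n => st (n + 1) (Fin.snoc (fun _ : Fin n => ξ₀) ξ₁)
    with hv
  have hv0 : st 1 (fun _ => ξ₁) = v 0 := by
    apply congrArg
    funext j
    fin_cases j
    simp [Fin.snoc]
  have hcre : ∀ m : ℕ, c ξ₀ (v m) = v (m + 1) := by
    intro m
    rw [hv]
    show c ξ₀ (st (m + 1) _) = _
    rw [hc ξ₀ (m + 1) _]
    apply congrArg
    rw [Fin.cons_snoc_eq_snoc_cons]
    apply congrArg₂ _ _ rfl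
    funext j
    refine Fin.cases rfl (fun _ => rfl) j
  have hann0 : a ξ₀ (v 0) = 0 := by
    rw [hv]
    show a ξ₀ (st 1 _) = 0
    rw [ha ξ₀ 1 _]
    simp [Fin.snoc, horth₁]
  have hann : ∀ m : ℕ, a ξ₀ (v (m + 1)) = ((qInt q (m + 1) : ℝ) : ℂ) • v m := by
    intro m
    rw [hv]
    show a ξ₀ (st (m + 2) _) = _
    rw [ha ξ₀ (m + 2) _, Fin.sum_univ_castSucc]
    have hlast : ((q : ℂ) ^ ((Fin.last (m+1) : Fin (m+2)) : ℕ) *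
        (inner ℂ ξ₀ ((Fin.snoc (fun _ : Fin (m+1) => ξ₀) ξ₁ : Fin (m+2) → H) (Fin.last (m+1))) : ℂ))
        • st (m + 2 - 1) (removeNth (Fin.last (m+1)) (Fin.snoc (fun _ : Fin (m+1) => ξ₀) ξ₁))
        = 0 := by
      simp [horth₁]
    rw [hlast, add_zero]
    have hterm : ∀ i : Fin (m + 1),
        ((q : ℂ) ^ ((i.castSucc : Fin (m+2)) : ℕ) *
        (inner ℂ ξ₀ ((Fin.snoc (fun _ : Fin (m+1) => ξ₀) ξ₁ : Fin (m+2) → H) i.castSucc) : ℂ))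
        • st (m + 2 - 1) (removeNth i.castSucc (Fin.snoc (fun _ : Fin (m+1) => ξ₀) ξ₁))
        = (q : ℂ) ^ (i : ℕ) • v m := by
      intro i
      rw [removeNth_castSucc_snoc]
      simp only [Fin.snoc_castSucc, hξ₀, mul_one]
      rfl
    rw [Finset.sum_congr rfl fun i _ => hterm i]
    rw [← Finset.sum_smul]
    congr 1
    rw [qInt]
    push_cast
    rw [← Fin.sum_univ_eq_sum_range]
  -- main induction
  induction n using Nat.twoStepInduction with
  | zero =>
    simp only [qHermite, map_one, Module.End.one_apply]
    exact hv0
  | one =>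
    simp only [qHermite, Polynomial.aeval_X]
    rw [hv0, hs]
    show c ξ₀ (v 0) + a ξ₀ (v 0) = v 1
    rw [hcre 0, hann0, add_zero]
  | more m ih1 ih2 =>
    show (Polynomial.aeval s (qHermite q (m + 2))) (st 1 fun _ => ξ₁) = v (m + 2)
    rw [qHermite]
    simp only [map_sub, map_mul, Polynomial.aeval_X, Polynomial.aeval_C,
      LinearMap.sub_apply, Module.End.mul_apply, LinearMap.smul_apply]
    rw [ih2, ih1]
    rw [Module.algebraMap_end_apply]
    show c ξ₀ (v (m + 1)) + a ξ₀ (v (m + 1)) - _ = _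
    rw [hcre (m + 1), hann m]
    abel
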